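/- Let G be a connected simple graph with n ≥ 2 vertices and m edges. Then s_Q(G) ≥ (2/n)·sqrt(n·M₁(G) - 4m² + 2mn), where M₁(G) = Σᵢ dᵢ² is the first Zagreb index. -/

import Mathlib

open Matrix

private lemma trace_eq_sum_eig {n : ℕ} {A : Matrix (Fin n) (Fin n) ℝ} (hA : A.IsHermitian) :
    A.trace = ∑ i, hA.eigenvalues i := by
  conv_lhs => rw [hA.spectral_theorem, Unitary.conjStarAlgAut_apply]
  rw [Matrix.trace_mul_cycle]
  rw [show (star (hA.eigenvectorUnitary : Matrix (Fin n) (Fin n) ℝ)) *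
      (hA.eigenvectorUnitary : Matrix (Fin n) (Fin n) ℝ) = 1 from
    Unitary.coe_star_mul_self _]
  simp [Matrix.trace_diagonal]

private lemma trace_sq_eq_sum_eig_sq {n : ℕ} {A : Matrix (Fin n) (Fin n) ℝ}
    (hA : A.IsHermitian) : (A * A).trace = ∑ i, hA.eigenvalues i ^ 2 := by
  set U : Matrix (Fin n) (Fin n) ℝ := (hA.eigenvectorUnitary : Matrix (Fin n) (Fin n) ℝ) with hU
  set D : Matrix (Fin n) (Fin n) ℝ := diagonal (RCLike.ofReal ∘ hA.eigenvalues) with hD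
  have h1 : star U * U = 1 := Unitary.coe_star_mul_self _
  have key : A * A = U * (D * D) * star U := by
    conv_lhs => rw [hA.spectral_theorem, Unitary.conjStarAlgAut_apply]
    simp only [mul_assoc]
    rw [← mul_assoc (star U) U, h1, one_mul]
  rw [key, Matrix.trace_mul_cycle, ← mul_assoc, h1, one_mul, hD,
    Matrix.diagonal_mul_diagonal]
  simp [Matrix.trace_diagonal, sq]

/-- The spread of a Hermitian real matrix: largest minus smallest eigenvalue. -/
noncomputable def spread {n : ℕ} {A : Matrix (Fin n) (Fin n) ℝ} (hA : A.IsHermitian) : ℝ :=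
  (⨆ i, hA.eigenvalues i) - ⨅ i, hA.eigenvalues i

/-- The signless Laplacian matrix Q = D + A of a simple graph. -/
noncomputable def signlessLaplacian {n : ℕ} (G : SimpleGraph (Fin n)) [DecidableRel G.Adj] :
    Matrix (Fin n) (Fin n) ℝ :=
  Matrix.diagonal (fun i => (G.degree i : ℝ)) + G.adjMatrix ℝ

private lemma trace_Q {n : ℕ} (G : SimpleGraph (Fin n)) [DecidableRel G.Adj] :
    (signlessLaplacian G).trace = ∑ i, (G.degree i : ℝ) := by
  simp [signlessLaplacian, Matrix.trace_add, Matrix.trace_diagonal]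

private lemma trace_Q_sq {n : ℕ} (G : SimpleGraph (Fin n)) [DecidableRel G.Adj] :
    (signlessLaplacian G * signlessLaplacian G).trace
      = ∑ i, (G.degree i : ℝ) ^ 2 + ∑ i, (G.degree i : ℝ) := by
  have h1 : ((Matrix.diagonal (fun i => (G.degree i : ℝ))) * G.adjMatrix ℝ).trace = 0 := by
    simp only [Matrix.trace, Matrix.diag, Matrix.mul_apply, Matrix.diagonal_apply]
    refine Finset.sum_eq_zero fun i _ => Finset.sum_eq_zero fun j _ => ?_
    by_cases h : i = j
    · subst h; simp
    · simp [h]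
  have h2 : (G.adjMatrix ℝ * (Matrix.diagonal (fun i => (G.degree i : ℝ)))).trace = 0 := by
    simp only [Matrix.trace, Matrix.diag, Matrix.mul_apply, Matrix.diagonal_apply]
    refine Finset.sum_eq_zero fun i _ => Finset.sum_eq_zero fun j _ => ?_
    by_cases h : j = i
    · subst h; simp
    · simp [h]
  have h3 : (G.adjMatrix ℝ * G.adjMatrix ℝ).trace = ∑ i, (G.degree i : ℝ) := by
    have h := fun i => G.adjMatrix_mul_self_apply_self (α := ℝ) i
    simp only [Matrix.trace, Matrix.diag, h]
  simp only [signlessLaplacian, add_mul, mul_add, Matrix.trace_add, h1, h2, h3,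
    Matrix.diagonal_mul_diagonal, Matrix.trace_diagonal]
  simp [sq]

theorem spread_Q_zagreb_lower_bound {n : ℕ} (hn : 2 ≤ n)
    (G : SimpleGraph (Fin n)) [DecidableRel G.Adj] (hG : G.Connected)
    (hQ : (signlessLaplacian G).IsHermitian) :
    spread hQ ≥ (2 / (n : ℝ)) * Real.sqrt ((n : ℝ) * (∑ i, (G.degree i : ℝ) ^ 2)
      - 4 * (G.edgeFinset.card : ℝ) ^ 2 + 2 * (G.edgeFinset.card : ℝ) * n) := by
  have hne : Nonempty (Fin n) := ⟨⟨0, by omega⟩⟩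
  set μ : Fin n → ℝ := hQ.eigenvalues with hμ
  set M : ℝ := ⨆ i, μ i with hM
  set m' : ℝ := ⨅ i, μ i with hm'
  have hle : ∀ i, μ i ≤ M := fun i => le_ciSup (Set.Finite.bddAbove (Set.finite_range μ)) i
  have hge : ∀ i, m' ≤ μ i := fun i => ciInf_le (Set.Finite.bddBelow (Set.finite_range μ)) i
  have hMm : m' ≤ M := le_trans (hge (Classical.arbitrary _)) (hle (Classical.arbitrary _))
  set S : ℝ := ∑ i, μ i with hS
  set T : ℝ := ∑ i, μ i ^ 2 with hT
  -- handshake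
  have hhs : ∑ i, (G.degree i : ℝ) = 2 * (G.edgeFinset.card : ℝ) := by
    rw [← Nat.cast_sum, G.sum_degrees_eq_twice_card_edges]
    push_cast
    ring
  have hSval : S = 2 * (G.edgeFinset.card : ℝ) := by
    rw [hS, hμ, ← trace_eq_sum_eig hQ, trace_Q, hhs]
  have hTval : T = (∑ i, (G.degree i : ℝ) ^ 2) + 2 * (G.edgeFinset.card : ℝ) := by
    rw [hT, hμ, ← trace_sq_eq_sum_eig_sq hQ, trace_Q_sq, hhs]
  -- Popoviciu
  have hpop : ∑ i, (M - μ i) * (μ i - m') ≥ 0 :=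
    Finset.sum_nonneg fun i _ => mul_nonneg (by linarith [hle i]) (by linarith [hge i])
  have hexp : ∑ i, (M - μ i) * (μ i - m') = (M + m') * S - (n : ℝ) * M * m' - T := by
    simp only [hS, hT, Finset.mul_sum, ← Finset.sum_sub_distrib]
    rw [show ((n : ℝ) * M * m') = ∑ _i : Fin n, M * m' by
      simp [Finset.sum_const, mul_assoc]]
    rw [← Finset.sum_sub_distrib, ← Finset.sum_sub_distrib]
    apply Finset.sum_congr rfl
    intro i _; ring
  have hT' : T ≤ (M + m') * S - (n : ℝ) * M * m' := by
    rw [hexp] at hpop; linarith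
  have hnpos : (0 : ℝ) < n := by positivity
  have hkey : (n : ℝ) * T - S ^ 2 ≤ ((n : ℝ) / 2 * (M - m')) ^ 2 := by
    nlinarith [sq_nonneg (S - (n : ℝ) * (M + m') / 2), hT', hnpos]
  have hX : (n : ℝ) * (∑ i, (G.degree i : ℝ) ^ 2)
      - 4 * (G.edgeFinset.card : ℝ) ^ 2 + 2 * (G.edgeFinset.card : ℝ) * n
      = (n : ℝ) * T - S ^ 2 := by
    rw [hSval, hTval]; ring
  rw [hX]
  have hsqrt : Real.sqrt ((n : ℝ) * T - S ^ 2) ≤ (n : ℝ) / 2 * (M - m') := by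
    have h0 : 0 ≤ (n : ℝ) / 2 * (M - m') := by
      apply mul_nonneg (by positivity); linarith
    calc Real.sqrt ((n : ℝ) * T - S ^ 2) ≤ Real.sqrt (((n : ℝ) / 2 * (M - m')) ^ 2) :=
          Real.sqrt_le_sqrt hkey
      _ = (n : ℝ) / 2 * (M - m') := Real.sqrt_sq h0
  have : (2 / (n : ℝ)) * Real.sqrt ((n : ℝ) * T - S ^ 2) ≤ M - m' := by
    rw [ge_iff_le, div_mul_eq_mul_div, div_le_iff₀ hnpos] at *
    nlinarith [hsqrt]
  simpa [spread, ge_iff_le, hM, hm'] using this
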